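/- Lemma 1 (ladder strings lie in the Hamiltonian algebra): there exist choice functions a, b : Fin N → Fin 2 such that, writing P^u_i, \bar P^u_i, P^d_i, \bar P^d_i for the corresponding X/Y letters, the following matrices all lie in g(S₁): for every i with 1 ≤ i ≤ N−1, Complex.I • P(→X_{u(0)}(P^u_i)_{u(i)}), Complex.I • P(→Y_{u(0)}(\bar P^u_i)_{u(i)}), Complex.I • P(→X_{d(0)}(P^d_i)_{d(i)}), and Complex.I • P(→Y_{d(0)}(\bar P^d_i)_{d(i)}); and for every i with 1 ≤ i ≤ N−2, Complex.I • P(→(P^u_i)_{u(i)}(\bar P^u_{i+1})_{u(i+1)}), Complex.I • P(→(\bar P^u_i)_{u(i)}(P^u_{i+1})_{u(i+1)}), Complex.I • P(→(P^d_i)_{d(i)}(\bar P^d_{i+1})_{d(i+1)}), and Complex.I • P(→(\bar P^d_i)_{d(i)}(P^d_{i+1})_{d(i+1)}). -/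

import Mathlib

open Matrix

attribute [local instance 100] LieRing.ofAssociativeRing

/-- The four 2×2 Pauli matrices: identity, X, Y, Z. -/
noncomputable def pauli : Fin 4 → Matrix (Fin 2) (Fin 2) ℂ
  | 0 => 1
  | 1 => !![0, 1; 1, 0]
  | 2 => !![0, -Complex.I; Complex.I, 0]
  | 3 => !![1, 0; 0, -1]

/-- The matrix of an `n`-qubit Pauli string `p : Fin n → Fin 4`,
the Kronecker product of the `pauli (p i)`. -/
noncomputable def PauliMat {n : ℕ} (p : Fin n → Fin 4) :
    Matrix (Fin n → Fin 2) (Fin n → Fin 2) ℂ :=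
  Matrix.of fun x y => ∏ i, pauli (p i) (x i) (y i)

/-- The Hamiltonian algebra of a set of Pauli strings: the Lie ℝ-subalgebra of the
complex matrices generated by `{I • P(p) : p ∈ S}`. -/
noncomputable def hamAlg {n : ℕ} (S : Set (Fin n → Fin 4)) :
    LieSubalgebra ℝ (Matrix (Fin n → Fin 2) (Fin n → Fin 2) ℂ) :=
  LieSubalgebra.lieSpan ℝ _ ((fun p => Complex.I • PauliMat p) '' S)

/-- The Pauli string `→A_iB_j`: letter `A` at `i`, letter `B` at `j`, `Z` strictly
between `i` and `j`, identity elsewhere. -/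
def ladderString {n : ℕ} (i j : Fin n) (A B : Fin 4) : Fin n → Fin 4 :=
  fun k => if k = i then A else if k = j then B
    else if min i j < k ∧ k < max i j then 3 else 0

/-- The Pauli string `Z_kZ_l`. -/
def zzString {n : ℕ} (k l : Fin n) : Fin n → Fin 4 :=
  fun m => if m = k ∨ m = l then 3 else 0

/-- The Pauli string `Z_k`. -/
def zString {n : ℕ} (k : Fin n) : Fin n → Fin 4 :=
  fun m => if m = k then 3 else 0

/-- A choice of letter: `X` if `c = 0`, `Y` if `c = 1`. -/
def ltr (c : Fin 2) : Fin 4 := if c = 0 then 1 else 2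

/-- The opposite letter: `Y` if `c = 0`, `X` if `c = 1`. -/
def ltrBar (c : Fin 2) : Fin 4 := if c = 0 then 2 else 1

/-- Pauli strings of the Jordan–Wigner transformed hopping terms of one spin species,
with sites embedded via `v : Fin N → Fin (2N)` and hoppings on the edges of `G`. -/
def Sspin {N : ℕ} (G : SimpleGraph (Fin N)) (v : Fin N → Fin (2 * N)) :
    Set (Fin (2 * N) → Fin 4) :=
  {p | ∃ k l : Fin N, G.Adj k l ∧
    (p = ladderString (v k) (v l) 1 1 ∨ p = ladderString (v k) (v l) 2 2)}

/-- Pauli strings of the Jordan–Wigner transformed free fermion model. -/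
def Sfree {N : ℕ} (G : SimpleGraph (Fin N)) (u d : Fin N → Fin (2 * N)) :
    Set (Fin (2 * N) → Fin 4) :=
  Sspin G u ∪ Sspin G d

/-- Pauli strings of the model with a single on-site Coulomb interaction at fermion
site `i0` (interaction term `Z_{u i0} Z_{d i0}`). -/
def Sint {N : ℕ} (G : SimpleGraph (Fin N)) (u d : Fin N → Fin (2 * N)) (i0 : Fin N) :
    Set (Fin (2 * N) → Fin 4) :=
  Sfree G u d ∪ {zzString (u i0) (d i0)}


/-! ### Auxiliary material for the proof -/

/-- Product table of Pauli letters (as a `(ZMod 2)²` XOR). -/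
def mul4 : Fin 4 → Fin 4 → Fin 4
  | 0, 0 => 0 | 0, 1 => 1 | 0, 2 => 2 | 0, 3 => 3
  | 1, 0 => 1 | 1, 1 => 0 | 1, 2 => 3 | 1, 3 => 2
  | 2, 0 => 2 | 2, 1 => 3 | 2, 2 => 0 | 2, 3 => 1
  | 3, 0 => 3 | 3, 1 => 2 | 3, 2 => 1 | 3, 3 => 0

/-- Phase exponents: `pauli a * pauli b = I ^ (nu4 a b) • pauli (mul4 a b)`. -/
def nu4 : Fin 4 → Fin 4 → ℕ
  | 0, 0 => 0 | 0, 1 => 0 | 0, 2 => 0 | 0, 3 => 0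
  | 1, 0 => 0 | 1, 1 => 0 | 1, 2 => 1 | 1, 3 => 3
  | 2, 0 => 0 | 2, 1 => 3 | 2, 2 => 0 | 2, 3 => 1
  | 3, 0 => 0 | 3, 1 => 1 | 3, 2 => 3 | 3, 3 => 0

lemma pauli_mul (a b : Fin 4) :
    pauli a * pauli b = Complex.I ^ (nu4 a b) • pauli (mul4 a b) := by
  fin_cases a <;> fin_cases b <;>
    ext i j <;> fin_cases i <;> fin_cases j <;>
    simp [pauli, mul4, nu4, Matrix.mul_apply, Fin.sum_univ_two, pow_succ,
      Complex.I_sq]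

lemma PauliMat_mul {n : ℕ} (p q : Fin n → Fin 4) :
    PauliMat p * PauliMat q =
      Complex.I ^ (∑ i, nu4 (p i) (q i)) • PauliMat (fun i => mul4 (p i) (q i)) := by
  ext x y
  simp only [Matrix.mul_apply, PauliMat, Matrix.of_apply, Matrix.smul_apply, smul_eq_mul]
  have : ∀ k : Fin n → Fin 2,
      (∏ i : Fin n, pauli (p i) (x i) (k i)) * ∏ i : Fin n, pauli (q i) (k i) (y i)
      = ∏ i : Fin n, (pauli (p i) (x i) (k i) * pauli (q i) (k i) (y i)) := by
    intro k; rw [Finset.prod_mul_distrib]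
  simp only [this]
  rw [← Fintype.prod_sum (fun (i : Fin n) (j : Fin 2) => pauli (p i) (x i) j * pauli (q i) j (y i))]
  have : ∀ i : Fin n, (∑ j : Fin 2, pauli (p i) (x i) j * pauli (q i) j (y i))
      = Complex.I ^ (nu4 (p i) (q i)) * pauli (mul4 (p i) (q i)) (x i) (y i) := by
    intro i
    have h := congrArg (fun M => M (x i) (y i)) (pauli_mul (p i) (q i))
    simpa [Matrix.mul_apply] using h
  rw [Finset.prod_congr rfl (fun i _ => this i), Finset.prod_mul_distrib,
    Finset.prod_pow_eq_pow_sum]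

lemma mul4_comm' : ∀ a b : Fin 4, mul4 a b = mul4 b a := by decide

lemma nu4_add : ∀ a b : Fin 4, (nu4 a b + nu4 b a) % 4 = 0 := by decide

lemma I_pow_of_odd {m : ℕ} (hm : m % 2 = 1) :
    Complex.I ^ m = Complex.I ∨ Complex.I ^ m = -Complex.I := by
  have h4 : Complex.I ^ (4 : ℕ) = 1 := Complex.I_pow_four
  have : Complex.I ^ m = Complex.I ^ (m % 4) := by
    conv_lhs => rw [← Nat.div_add_mod m 4]
    rw [pow_add, pow_mul, h4, one_pow, one_mul]
  rw [this]
  have : m % 4 = 1 ∨ m % 4 = 3 := by omega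
  rcases this with h | h <;> rw [h] <;> simp [pow_succ, Complex.I_sq]

/-- Key lemma: the algebra elements `I•P(p)` are closed under taking products of the
underlying strings, whenever the strings anticommute (odd total phase exponent). -/
lemma key_mem {n : ℕ} (S : Set (Fin n → Fin 4)) (p q : Fin n → Fin 4)
    (hp : Complex.I • PauliMat p ∈ hamAlg S)
    (hq : Complex.I • PauliMat q ∈ hamAlg S)
    (hodd : (∑ i, nu4 (p i) (q i)) % 2 = 1) :
    Complex.I • PauliMat (fun i => mul4 (p i) (q i)) ∈ hamAlg S := by
  set m := ∑ i, nu4 (p i) (q i) with hm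
  set m' := ∑ i, nu4 (q i) (p i) with hm'
  have hdvd : 4 ∣ m + m' := by
    rw [hm, hm', ← Finset.sum_add_distrib]
    exact Finset.dvd_sum fun i _ => Nat.dvd_of_mod_eq_zero (nu4_add (p i) (q i))
  have h4 : Complex.I ^ (4 : ℕ) = 1 := Complex.I_pow_four
  have hprod : Complex.I ^ m * Complex.I ^ m' = 1 := by
    obtain ⟨c, hc⟩ := hdvd
    rw [← pow_add, hc, pow_mul, h4, one_pow]
  have hbr : ⁅Complex.I • PauliMat p, Complex.I • PauliMat q⁆ =
      ((-1) * Complex.I ^ m - (-1) * Complex.I ^ m') •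
        PauliMat (fun i => mul4 (p i) (q i)) := by
    rw [Ring.lie_def, smul_mul_assoc, smul_mul_assoc, mul_smul_comm, mul_smul_comm,
      PauliMat_mul p q, PauliMat_mul q p]
    have hs : (fun i => mul4 (q i) (p i)) = fun i => mul4 (p i) (q i) := by
      funext i; rw [mul4_comm']
    rw [hs, smul_smul, smul_smul, smul_smul, smul_smul, ← sub_smul, ← hm, ← hm']
    congr 1
    ring_nf
    rw [Complex.I_sq]
    ring
  have hsm : ∀ (r : ℝ) (M : Matrix (Fin n → Fin 2) (Fin n → Fin 2) ℂ),
      ((r : ℂ)) • M = r • M := fun r M => by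
    rw [← Complex.coe_algebraMap]; exact algebraMap_smul ℂ r M
  rcases I_pow_of_odd hodd with h | h
  · have h' : Complex.I ^ m' = -Complex.I := by
      have h2 : (Complex.I ^ m)⁻¹ = Complex.I ^ m' := inv_eq_of_mul_eq_one_right hprod
      rw [h, Complex.inv_I] at h2
      exact h2.symm
    rw [h, h'] at hbr
    have heq : Complex.I • PauliMat (fun i => mul4 (p i) (q i)) =
        (-(2:ℝ)⁻¹ : ℝ) • ⁅Complex.I • PauliMat p, Complex.I • PauliMat q⁆ := by
      rw [hbr, ← hsm, smul_smul]
      congr 1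
      push_cast
      ring
    rw [heq]
    exact (hamAlg S).smul_mem _ ((hamAlg S).lie_mem hp hq)
  · have h' : Complex.I ^ m' = Complex.I := by
      have h2 : (Complex.I ^ m)⁻¹ = Complex.I ^ m' := inv_eq_of_mul_eq_one_right hprod
      rw [h, inv_neg, Complex.inv_I, neg_neg] at h2
      exact h2.symm
    rw [h, h'] at hbr
    have heq : Complex.I • PauliMat (fun i => mul4 (p i) (q i)) =
        ((2:ℝ)⁻¹ : ℝ) • ⁅Complex.I • PauliMat p, Complex.I • PauliMat q⁆ := by
      rw [hbr, ← hsm, smul_smul]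
      congr 1
      push_cast
      ring
    rw [heq]
    exact (hamAlg S).smul_mem _ ((hamAlg S).lie_mem hp hq)

/-- Pointwise product of Pauli strings. -/
def padd {n : ℕ} (p q : Fin n → Fin 4) : Fin n → Fin 4 := fun i => mul4 (p i) (q i)

/-- Jordan–Wigner/Majorana string: `Z`'s strictly below `a`, letter `A` at `a`. -/
def majS {n : ℕ} (a : Fin n) (A : Fin 4) : Fin n → Fin 4 :=
  fun m => if m = a then A else if m < a then 3 else 0

/-- The mod-2 symplectic (anticommutation) form on letters. -/
def om (a b : Fin 4) : ZMod 2 := (nu4 a b : ZMod 2)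

lemma om_addl : ∀ a b c : Fin 4, om (mul4 a b) c = om a c + om b c := by decide
lemma om_addr : ∀ a b c : Fin 4, om a (mul4 b c) = om a b + om a c := by decide
lemma mul4_cancel : ∀ a b c : Fin 4, mul4 (mul4 a b) (mul4 b c) = mul4 a c := by decide

lemma padd_comm {n : ℕ} (p q : Fin n → Fin 4) : padd p q = padd q p := by
  funext i; exact mul4_comm' _ _

lemma odd_of_omega {n : ℕ} {p q : Fin n → Fin 4}
    (h : (∑ i, om (p i) (q i)) = 1) : (∑ i, nu4 (p i) (q i)) % 2 = 1 := by
  have hc : ((∑ i, nu4 (p i) (q i) : ℕ) : ZMod 2) = ∑ i, om (p i) (q i) := by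
    push_cast [om]; rfl
  rcases Nat.mod_two_eq_zero_or_one (∑ i, nu4 (p i) (q i)) with h0 | h1
  · exfalso
    rw [h] at hc
    have : (((∑ i, nu4 (p i) (q i)) % 2 : ℕ) : ZMod 2) = 1 := by
      rw [ZMod.natCast_mod]; exact hc
    rw [h0] at this
    simp at this
  · exact h1

lemma Omega_majS {n : ℕ} (a b : Fin n) (A B : Fin 4)
    (hA : A = 1 ∨ A = 2) (hB : B = 1 ∨ B = 2) :
    (∑ i, om (majS a A i) (majS b B i)) =
      if a = b then (if A = B then 0 else 1) else 1 := by
  rcases lt_trichotomy a b with hab | hab | hab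
  · rw [if_neg hab.ne]
    rw [Finset.sum_eq_single a]
    · have h1 : majS a A a = A := by simp [majS]
      have h2 : majS b B a = 3 := by
        simp only [majS]
        rw [if_neg hab.ne, if_pos hab]
      rw [h1, h2]
      rcases hA with rfl | rfl <;> decide
    · intro i _ hia
      simp only [majS]
      rw [if_neg hia]
      rcases hB with rfl | rfl <;>
        split_ifs with h1 h2 h3 h4 <;>
        first
          | decide
          | (exfalso; simp only [Fin.lt_def, Fin.ext_iff] at *; omega)
    · intro h; exact absurd (Finset.mem_univ a) h
  · subst hab
    rw [if_pos rfl]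
    rw [Finset.sum_eq_single a]
    · have h1 : majS a A a = A := by simp [majS]
      have h2 : majS a B a = B := by simp [majS]
      rw [h1, h2]
      rcases hA with rfl | rfl <;> rcases hB with rfl | rfl <;> decide
    · intro i _ hia
      simp only [majS]
      rw [if_neg hia]
      split_ifs <;> decide
    · intro h; exact absurd (Finset.mem_univ a) h
  · rw [if_neg hab.ne']
    rw [Finset.sum_eq_single b]
    · have h1 : majS a A b = 3 := by
        simp only [majS]
        rw [if_neg hab.ne, if_pos hab]
      have h2 : majS b B b = B := by simp [majS]
      rw [h1, h2]
      rcases hB with rfl | rfl <;> decide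
    · intro i _ hib
      simp only [majS]
      rw [if_neg hib]
      rcases hA with rfl | rfl <;>
        split_ifs with h1 h2 h3 h4 <;>
        first
          | decide
          | (exfalso; simp only [Fin.lt_def, Fin.ext_iff] at *; omega)
    · intro h; exact absurd (Finset.mem_univ b) h

lemma ladderString_symm {n : ℕ} (a b : Fin n) (hab : a ≠ b) (A B : Fin 4) :
    ladderString a b A B = ladderString b a B A := by
  funext m
  simp only [ladderString]
  by_cases h1 : m = a
  · subst h1; rw [if_pos rfl, if_neg hab, if_pos rfl]
  · by_cases h2 : m = b
    · subst h2; rw [if_neg h1, if_pos rfl, if_pos rfl]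
    · rw [if_neg h1, if_neg h2, if_neg h2, if_neg h1, min_comm, max_comm]

lemma ladder_eq_padd {n : ℕ} (a b : Fin n) (hab : a < b) (A B : Fin 4) :
    ladderString a b A B = padd (majS a (mul4 3 A)) (majS b B) := by
  have h33 : ∀ C : Fin 4, mul4 (mul4 3 C) 3 = C := by decide
  have h0r : ∀ C : Fin 4, mul4 0 C = C := by decide
  funext m
  simp only [ladderString, padd, majS]
  by_cases h1 : m = a
  · subst h1
    rw [if_pos rfl, if_pos rfl, if_neg hab.ne, if_pos hab, h33]
  · by_cases h2 : m = b
    · subst h2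
      rw [if_neg h1, if_pos rfl, if_neg h1, if_neg (lt_asymm hab), if_pos rfl, h0r]
    · rw [if_neg h1, if_neg h2, if_neg h1, if_neg h2,
        min_eq_left hab.le, max_eq_right hab.le]
      by_cases h3 : m < a
      · rw [if_pos h3, if_pos (h3.trans hab),
          if_neg (by rintro ⟨hc1, _⟩; exact lt_irrefl m (h3.trans hc1))]
        decide
      · rw [if_neg h3]
        by_cases h4 : m < b
        · rw [if_pos h4, if_pos ⟨lt_of_le_of_ne (not_lt.mp h3) (Ne.symm h1), h4⟩, h0r]
        · rw [if_neg h4, if_neg (by push_neg; intro _; exact not_lt.mp h4), h0r]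

lemma gen_mem {n : ℕ} {S : Set (Fin n → Fin 4)} {p : Fin n → Fin 4} (hp : p ∈ S) :
    Complex.I • PauliMat p ∈ hamAlg S :=
  LieSubalgebra.subset_lieSpan (Set.mem_image_of_mem _ hp)

/-- The opposite choice bit. -/
def bar2 (c : Fin 2) : Fin 2 := if c = 0 then 1 else 0

lemma bar2_bar2 : ∀ c, bar2 (bar2 c) = c := by decide
lemma ltr_mem : ∀ c, ltr c = 1 ∨ ltr c = 2 := by decide
lemma ltr_inj : ∀ c c', ltr c = ltr c' → c = c' := by decide
lemma ltrBar_eq : ∀ c, ltrBar c = ltr (bar2 c) := by decide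
lemma m31 : mul4 3 1 = 2 := by decide
lemma m32 : mul4 3 2 = 1 := by decide
lemma m3ltrBar : ∀ c, mul4 3 (ltrBar c) = ltr c := by decide
lemma m3ltr : ∀ c, mul4 3 (ltr c) = ltr (bar2 c) := by decide

section Sector

variable {N : ℕ} (v : Fin N → Fin (2 * N)) (S : Set (Fin (2 * N) → Fin 4))

/-- The Majorana string attached to a fermionic site and a choice bit. -/
def gam (μ : Fin N × Fin 2) : Fin (2 * N) → Fin 4 := majS (v μ.1) (ltr μ.2)

/-- `TT μ ν` : the Majorana bilinear `γ_μ γ_ν` (as a Pauli string, times `I`) lies in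
the Hamiltonian algebra. -/
def TT (μ ν : Fin N × Fin 2) : Prop :=
  Complex.I • PauliMat (padd (gam v μ) (gam v ν)) ∈ hamAlg S

variable {v S}

lemma TT_symm {μ ν} (h : TT v S μ ν) : TT v S ν μ := by
  unfold TT at *; rwa [padd_comm]

lemma Omega_gam (hv : Function.Injective v) (μ ν : Fin N × Fin 2) :
    (∑ i, om (gam v μ i) (gam v ν i)) = if μ = ν then 0 else 1 := by
  unfold gam
  rw [Omega_majS _ _ _ _ (ltr_mem _) (ltr_mem _)]
  by_cases h : μ = ν
  · subst h; simp
  · rw [if_neg h]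
    by_cases h1 : v μ.1 = v ν.1
    · have h1' : μ.1 = ν.1 := hv h1
      rw [if_pos h1, if_neg]
      intro hl
      exact h (Prod.ext h1' (ltr_inj _ _ hl))
    · rw [if_neg h1]

lemma TT_combine (hv : Function.Injective v) {μ ν ρ : Fin N × Fin 2}
    (hμν : μ ≠ ν) (hνρ : ν ≠ ρ) (hμρ : μ ≠ ρ)
    (h1 : TT v S μ ν) (h2 : TT v S ν ρ) : TT v S μ ρ := by
  unfold TT at *
  have hodd : (∑ i, nu4 ((padd (gam v μ) (gam v ν)) i) ((padd (gam v ν) (gam v ρ)) i)) % 2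
      = 1 := by
    apply odd_of_omega
    have : ∀ i, om ((padd (gam v μ) (gam v ν)) i) ((padd (gam v ν) (gam v ρ)) i)
        = om (gam v μ i) (gam v ν i) + om (gam v μ i) (gam v ρ i)
          + (om (gam v ν i) (gam v ν i) + om (gam v ν i) (gam v ρ i)) := by
      intro i
      simp only [padd, om_addl, om_addr]
      ring
    rw [Finset.sum_congr rfl (fun i _ => this i), Finset.sum_add_distrib,
      Finset.sum_add_distrib, Finset.sum_add_distrib,
      Omega_gam hv μ ν, Omega_gam hv μ ρ, Omega_gam hv ν ν, Omega_gam hv ν ρ,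
      if_neg hμν, if_neg hμρ, if_pos rfl, if_neg hνρ]
    decide
  have hres := key_mem S _ _ h1 h2 hodd
  have heq : (fun i => mul4 ((padd (gam v μ) (gam v ν)) i) ((padd (gam v ν) (gam v ρ)) i))
      = padd (gam v μ) (gam v ρ) := by
    funext i
    simp only [padd]
    exact mul4_cancel _ _ _
  rwa [heq] at hres

variable (G : SimpleGraph (Fin N))

lemma TT_gen (hv : StrictMono v) (hS : Sspin G v ⊆ S) {k l : Fin N} (h : G.Adj k l) :
    TT v S (k, 1) (l, 0) ∧ TT v S (k, 0) (l, 1) := by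
  have hx : ladderString (v k) (v l) 1 1 ∈ S := hS ⟨k, l, h, Or.inl rfl⟩
  have hy : ladderString (v k) (v l) 2 2 ∈ S := hS ⟨k, l, h, Or.inr rfl⟩
  have hne : k ≠ l := h.ne
  rcases lt_or_gt_of_ne hne with hkl | hkl
  · have hvkl : v k < v l := hv hkl
    constructor
    · have := gen_mem (S := S) hx
      rw [ladder_eq_padd _ _ hvkl, m31] at this
      exact this
    · have := gen_mem (S := S) hy
      rw [ladder_eq_padd _ _ hvkl, m32] at this
      exact this
  · have hvlk : v l < v k := hv hkl
    constructor
    · apply TT_symm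
      have := gen_mem (S := S) hy
      rw [ladderString_symm (v k) (v l) (ne_of_gt hvlk) 2 2,
        ladder_eq_padd _ _ hvlk, m32] at this
      exact this
    · apply TT_symm
      have := gen_mem (S := S) hx
      rw [ladderString_symm (v k) (v l) (ne_of_gt hvlk) 1 1,
        ladder_eq_padd _ _ hvlk, m31] at this
      exact this

lemma TT_edge_all (hv : StrictMono v) (hS : Sspin G v ⊆ S) {k l : Fin N} (h : G.Adj k l) :
    ∀ c : Fin 2, TT v S (k, c) (l, bar2 c) := by
  intro c
  fin_cases c
  · exact (TT_gen G hv hS h).2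
  · exact (TT_gen G hv hS h).1

lemma TT_reach_aux (hN : 0 < N) (hv : StrictMono v) (hS : Sspin G v ⊆ S) :
    ∀ (j k : Fin N) (_w : G.Walk j k), k = ⟨0, hN⟩ →
      j = ⟨0, hN⟩ ∨ ∃ c : Fin 2,
        TT v S (⟨0, hN⟩, 1) (j, c) ∧ TT v S (⟨0, hN⟩, 0) (j, bar2 c) := by
  intro j k w
  induction w with
  | nil => intro h; left; exact h
  | @cons a b _ hadj p ih =>
    intro hk
    rcases ih hk with hb | ⟨c, hc1, hc2⟩
    · subst hb
      by_cases haz : a = ⟨0, hN⟩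
      · left; exact haz
      · right
        refine ⟨0, ?_, ?_⟩
        · exact TT_symm ((TT_edge_all G hv hS hadj) 0)
        · exact TT_symm ((TT_edge_all G hv hS hadj) 1)
    · by_cases haz : a = ⟨0, hN⟩
      · left; exact haz
      · right
        by_cases hbz : b = ⟨0, hN⟩
        · subst hbz
          refine ⟨0, ?_, ?_⟩
          · exact TT_symm ((TT_edge_all G hv hS hadj) 0)
          · exact TT_symm ((TT_edge_all G hv hS hadj) 1)
        · have hedge : ∀ c' : Fin 2, TT v S (b, c') (a, bar2 c') :=
            fun c' => TT_edge_all G hv hS hadj.symm c'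
          have hzb : (⟨0, hN⟩ : Fin N) ≠ b := fun hh => hbz hh.symm
          have hza : (⟨0, hN⟩ : Fin N) ≠ a := fun hh => haz hh.symm
          have hab : a ≠ b := hadj.ne
          refine ⟨bar2 c, ?_, ?_⟩
          · exact TT_combine hv.injective
              (by simp [Prod.ext_iff, hzb]) (by simp [Prod.ext_iff, hab.symm])
              (by simp [Prod.ext_iff, hza]) hc1 (hedge c)
          · rw [bar2_bar2]
            have := TT_combine hv.injective
              (by simp [Prod.ext_iff, hzb]) (by simp [Prod.ext_iff, hab.symm])
              (by simp [Prod.ext_iff, hza]) hc2 (hedge (bar2 c))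
            rwa [bar2_bar2] at this

lemma TT_reach (hN : 0 < N) (hv : StrictMono v) (hG : G.Connected) (hS : Sspin G v ⊆ S)
    (i : Fin N) :
    i = ⟨0, hN⟩ ∨ ∃ c : Fin 2,
      TT v S (⟨0, hN⟩, 1) (i, c) ∧ TT v S (⟨0, hN⟩, 0) (i, bar2 c) :=
  TT_reach_aux G hN hv hS i ⟨0, hN⟩ (hG.preconnected i ⟨0, hN⟩).some rfl

/-- Target conversion A: from `TT (i,1) (j,c)` to the ladder string `X … ltr c`. -/
lemma TT_ladderA (hv : StrictMono v) {i j : Fin N} (hij : i < j) {c : Fin 2}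
    (h : TT v S (i, 1) (j, c)) :
    Complex.I • PauliMat (ladderString (v i) (v j) 1 (ltr c)) ∈ hamAlg S := by
  rw [ladder_eq_padd _ _ (hv hij), m31]
  exact h

lemma TT_ladderB (hv : StrictMono v) {i j : Fin N} (hij : i < j) {c : Fin 2}
    (h : TT v S (i, 0) (j, bar2 c)) :
    Complex.I • PauliMat (ladderString (v i) (v j) 2 (ltrBar c)) ∈ hamAlg S := by
  rw [ladder_eq_padd _ _ (hv hij), m32, ltrBar_eq]
  exact h

lemma TT_ladderC (hv : StrictMono v) {i j : Fin N} (hij : i < j) {c c' : Fin 2}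
    (h : TT v S (i, c) (j, c')) :
    Complex.I • PauliMat (ladderString (v i) (v j) (ltrBar c) (ltr c')) ∈ hamAlg S := by
  rw [ladder_eq_padd _ _ (hv hij), m3ltrBar]
  exact h

lemma TT_ladderD (hv : StrictMono v) {i j : Fin N} (hij : i < j) {c c' : Fin 2}
    (h : TT v S (i, bar2 c) (j, bar2 c')) :
    Complex.I • PauliMat (ladderString (v i) (v j) (ltr c) (ltrBar c')) ∈ hamAlg S := by
  rw [ladder_eq_padd _ _ (hv hij), m3ltr, ltrBar_eq]
  exact h

end Sector

/-- Lemma 1: there are choices of X/Y letters `a i` (spin up) and `b i` (spin down)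
such that all the ladder strings `→X_{u 0}P^u_i`, `→Y_{u 0}\bar P^u_i`,
`→P^u_i \bar P^u_{i+1}`, `→\bar P^u_i P^u_{i+1}` (and their spin-down analogues)
lie in the Hamiltonian algebra `g(S₁)`. -/
theorem ladder_strings_mem_hamAlg (N : ℕ) (hN : 1 ≤ N)
    (G : SimpleGraph (Fin N)) (hG : G.Connected)
    (u d : Fin N → Fin (2 * N)) (hu : StrictMono u) (hd : StrictMono d)
    (hdisj : Disjoint (Set.range u) (Set.range d))
    (hunion : Set.range u ∪ Set.range d = Set.univ) :
    ∃ a b : Fin N → Fin 2,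
      (∀ i : Fin N, 1 ≤ i.val →
        (Complex.I • PauliMat (ladderString (u ⟨0, hN⟩) (u i) 1 (ltr (a i))) ∈
            hamAlg (Sint G u d ⟨0, hN⟩) ∧
         Complex.I • PauliMat (ladderString (u ⟨0, hN⟩) (u i) 2 (ltrBar (a i))) ∈
            hamAlg (Sint G u d ⟨0, hN⟩) ∧
         Complex.I • PauliMat (ladderString (d ⟨0, hN⟩) (d i) 1 (ltr (b i))) ∈
            hamAlg (Sint G u d ⟨0, hN⟩) ∧
         Complex.I • PauliMat (ladderString (d ⟨0, hN⟩) (d i) 2 (ltrBar (b i))) ∈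
            hamAlg (Sint G u d ⟨0, hN⟩))) ∧
      (∀ i : ℕ, ∀ _h1 : 1 ≤ i, ∀ h2 : i + 1 < N,
        (Complex.I • PauliMat (ladderString (u ⟨i, by omega⟩) (u ⟨i + 1, h2⟩)
              (ltr (a ⟨i, by omega⟩)) (ltrBar (a ⟨i + 1, h2⟩))) ∈
            hamAlg (Sint G u d ⟨0, hN⟩) ∧
         Complex.I • PauliMat (ladderString (u ⟨i, by omega⟩) (u ⟨i + 1, h2⟩)
              (ltrBar (a ⟨i, by omega⟩)) (ltr (a ⟨i + 1, h2⟩))) ∈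
            hamAlg (Sint G u d ⟨0, hN⟩) ∧
         Complex.I • PauliMat (ladderString (d ⟨i, by omega⟩) (d ⟨i + 1, h2⟩)
              (ltr (b ⟨i, by omega⟩)) (ltrBar (b ⟨i + 1, h2⟩))) ∈
            hamAlg (Sint G u d ⟨0, hN⟩) ∧
         Complex.I • PauliMat (ladderString (d ⟨i, by omega⟩) (d ⟨i + 1, h2⟩)
              (ltrBar (b ⟨i, by omega⟩)) (ltr (b ⟨i + 1, h2⟩))) ∈
            hamAlg (Sint G u d ⟨0, hN⟩))) := by
  classical
  set S : Set (Fin (2 * N) → Fin 4) := Sint G u d ⟨0, hN⟩ with hSdef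
  have hSu : Sspin G u ⊆ S := fun p hp => Set.mem_union_left _ (Set.mem_union_left _ hp)
  have hSd : Sspin G d ⊆ S := fun p hp => Set.mem_union_left _ (Set.mem_union_right _ hp)
  have Hu := fun i => TT_reach (v := u) (S := S) G hN hu hG hSu i
  have Hd := fun i => TT_reach (v := d) (S := S) G hN hd hG hSd i
  have Hu' : ∀ i : Fin N, ∃ c : Fin 2, i ≠ ⟨0, hN⟩ →
      (TT u S (⟨0, hN⟩, 1) (i, c) ∧ TT u S (⟨0, hN⟩, 0) (i, bar2 c)) := by
    intro i
    by_cases hi : i = ⟨0, hN⟩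
    · exact ⟨0, fun h => absurd hi h⟩
    · obtain ⟨c, hc⟩ := (Hu i).resolve_left hi
      exact ⟨c, fun _ => hc⟩
  have Hd' : ∀ i : Fin N, ∃ c : Fin 2, i ≠ ⟨0, hN⟩ →
      (TT d S (⟨0, hN⟩, 1) (i, c) ∧ TT d S (⟨0, hN⟩, 0) (i, bar2 c)) := by
    intro i
    by_cases hi : i = ⟨0, hN⟩
    · exact ⟨0, fun h => absurd hi h⟩
    · obtain ⟨c, hc⟩ := (Hd i).resolve_left hi
      exact ⟨c, fun _ => hc⟩
  choose a haspec using Hu'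
  choose b hbspec using Hd'
  refine ⟨a, b, ?_, ?_⟩
  · intro i hi1
    have hiz : i ≠ (⟨0, hN⟩ : Fin N) := by
      intro hh; rw [Fin.ext_iff] at hh; simp at hh; omega
    have hzi : (⟨0, hN⟩ : Fin N) < i := by
      rw [Fin.lt_def]; simp; omega
    obtain ⟨hA1, hB1⟩ := haspec i hiz
    obtain ⟨hA2, hB2⟩ := hbspec i hiz
    exact ⟨TT_ladderA hu hzi hA1, TT_ladderB hu hzi hB1,
      TT_ladderA hd hzi hA2, TT_ladderB hd hzi hB2⟩
  · intro i h1 h2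
    have hii : (i : ℕ) < N := by omega
    set ii : Fin N := ⟨i, hii⟩ with hiidef
    set jj : Fin N := ⟨i + 1, h2⟩ with hjjdef
    have hiiz : ii ≠ (⟨0, hN⟩ : Fin N) := by
      intro hh; rw [Fin.ext_iff] at hh; simp [hiidef] at hh; omega
    have hjjz : jj ≠ (⟨0, hN⟩ : Fin N) := by
      intro hh; rw [Fin.ext_iff] at hh; simp [hjjdef] at hh
    have hij : ii < jj := by rw [Fin.lt_def]; simp [hiidef, hjjdef]
    have hiijj : ii ≠ jj := ne_of_lt hij
    obtain ⟨huA1, huB1⟩ := haspec ii hiiz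
    obtain ⟨huA2, huB2⟩ := haspec jj hjjz
    obtain ⟨hdA1, hdB1⟩ := hbspec ii hiiz
    obtain ⟨hdA2, hdB2⟩ := hbspec jj hjjz
    have ne1 : ∀ (x y : Fin 2), (ii, x) ≠ ((⟨0, hN⟩ : Fin N), y) :=
      fun x y hh => hiiz (congrArg Prod.fst hh)
    have ne2 : ∀ (x y : Fin 2), ((⟨0, hN⟩ : Fin N), x) ≠ (jj, y) :=
      fun x y hh => hjjz (congrArg Prod.fst hh).symm
    have ne3 : ∀ (x y : Fin 2), (ii, x) ≠ (jj, y) :=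
      fun x y hh => hiijj (congrArg Prod.fst hh)
    have hCu : TT u S (ii, a ii) (jj, a jj) :=
      TT_combine hu.injective (ne1 _ _) (ne2 _ _) (ne3 _ _) (TT_symm huA1) huA2
    have hDu : TT u S (ii, bar2 (a ii)) (jj, bar2 (a jj)) :=
      TT_combine hu.injective (ne1 _ _) (ne2 _ _) (ne3 _ _) (TT_symm huB1) huB2
    have hCd : TT d S (ii, b ii) (jj, b jj) :=
      TT_combine hd.injective (ne1 _ _) (ne2 _ _) (ne3 _ _) (TT_symm hdA1) hdA2
    have hDd : TT d S (ii, bar2 (b ii)) (jj, bar2 (b jj)) :=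
      TT_combine hd.injective (ne1 _ _) (ne2 _ _) (ne3 _ _) (TT_symm hdB1) hdB2
    exact ⟨TT_ladderD hu hij hDu, TT_ladderC hu hij hCu,
      TT_ladderD hd hij hDd, TT_ladderC hd hij hCd⟩
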